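/- arXiv:2202.00076 — 7 statements merged into one kernel-verified Lean document; each statement's English description precedes it below -/
import Mathlib

section
/- Suppose the feature map φ : S × A → ℝ^d has linearly independent components (i.e., if φ(s,a)ᵀw = 0 for all (s,a) then w = 0), each map θ ↦ π_{θ,h}(s)(a) is differentiable on ℝ^m, for each h ∈ {1,…,H} there exists w_{r,h} ∈ ℝ^d with r_h(s,a) = φ(s,a)ᵀw_{r,h} for all (s,a), and Bellman completeness holds: for every θ ∈ ℝ^m, h ∈ {1,…,H} and w ∈ ℝ^d there exists w' ∈ ℝ^d such that ∑_{s'} p_h(s,a)(s') ∑_{a'} π_{θ,h+1}(s')(a') φ(s',a')ᵀw = φ(s,a)ᵀw' for all (s,a). Then for every h ∈ {1,…,H+1} there is a unique function w_h : ℝ^m → ℝ^d with Q_h^θ(s,a) = φ(s,a)ᵀ w_h(θ) for all θ, s, a; moreover each w_h is differentiable, and for every j ∈ {1,…,m} and all θ, s, a one has ∂Q_h^θ(s,a)/∂θ_j = φ(s,a)ᵀ (∂w_h(θ)/∂θ_j). -/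
open Finset Matrix

theorem linear_bellman_completeness_implies_gradient_realizability
    {S A : Type*} [Fintype S] [Fintype A] [Nonempty S] [Nonempty A]
    (m H d : ℕ)
    (p : ℕ → S → A → S → ℝ) (r : ℕ → S → A → ℝ)
    (π : (Fin m → ℝ) → ℕ → S → A → ℝ)
    (φ : S → A → Fin d → ℝ)
    (hp_nonneg : ∀ h, 1 ≤ h → h ≤ H → ∀ s a s', 0 ≤ p h s a s')
    (hp_sum : ∀ h, 1 ≤ h → h ≤ H → ∀ s a, ∑ s', p h s a s' = 1)
    (hπ_nonneg : ∀ θ h, 1 ≤ h → h ≤ H + 1 → ∀ s a, 0 ≤ π θ h s a)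
    (hπ_sum : ∀ θ h, 1 ≤ h → h ≤ H + 1 → ∀ s, ∑ a, π θ h s a = 1)
    (hφ_indep : ∀ w : Fin d → ℝ, (∀ s a, φ s a ⬝ᵥ w = 0) → w = 0)
    (hπ_diff : ∀ h s a, Differentiable ℝ fun θ => π θ h s a)
    (hr_lin : ∀ h, 1 ≤ h → h ≤ H → ∃ w : Fin d → ℝ, ∀ s a, r h s a = φ s a ⬝ᵥ w)
    (hBellman : ∀ (θ : Fin m → ℝ) (h : ℕ), 1 ≤ h → h ≤ H → ∀ w : Fin d → ℝ,
      ∃ w' : Fin d → ℝ, ∀ s a,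
        ∑ s', p h s a s' * ∑ a', π θ (h + 1) s' a' * (φ s' a' ⬝ᵥ w) = φ s a ⬝ᵥ w')
    (Q : (Fin m → ℝ) → ℕ → S → A → ℝ)
    (hQtop : ∀ θ s a, Q θ (H + 1) s a = 0)
    (hQrec : ∀ θ h, 1 ≤ h → h ≤ H → ∀ s a,
      Q θ h s a = r h s a
        + ∑ s', p h s a s' * ∑ a', π θ (h + 1) s' a' * Q θ (h + 1) s' a') :
    ∀ h, 1 ≤ h → h ≤ H + 1 →
      (∃! wf : (Fin m → ℝ) → Fin d → ℝ, ∀ θ s a, Q θ h s a = φ s a ⬝ᵥ wf θ) ∧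
        ∀ wf : (Fin m → ℝ) → Fin d → ℝ, (∀ θ s a, Q θ h s a = φ s a ⬝ᵥ wf θ) →
          Differentiable ℝ wf ∧
            ∀ (j : Fin m) (θ : Fin m → ℝ) (s : S) (a : A),
              fderiv ℝ (fun θ' => Q θ' h s a) θ (Pi.single j 1) =
                φ s a ⬝ᵥ fderiv ℝ wf θ (Pi.single j 1) := by
  -- Key decreasing induction: existence of a linear representation and differentiability of Q
  have key : ∀ k : ℕ, ∀ h, 1 ≤ h → h ≤ H + 1 → H + 1 - h ≤ k →
      (∃ wf : (Fin m → ℝ) → Fin d → ℝ, ∀ θ s a, Q θ h s a = φ s a ⬝ᵥ wf θ) ∧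
        (∀ s a, Differentiable ℝ fun θ => Q θ h s a) := by
    intro k
    induction k with
    | zero =>
      intro h h1 h2 hk
      have hh : h = H + 1 := le_antisymm h2 (by omega)
      subst hh
      constructor
      · refine ⟨fun _ => 0, fun θ s a => ?_⟩
        simp [hQtop θ s a]
      · intro s a
        have : (fun θ : Fin m → ℝ => Q θ (H + 1) s a) = fun _ => 0 := by
          funext θ; exact hQtop θ s a
        rw [this]; exact differentiable_const 0
    | succ k ih =>
      intro h h1 h2 hk
      by_cases hcase : h = H + 1
      · subst hcase
        constructor
        · refine ⟨fun _ => 0, fun θ s a => ?_⟩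
          simp [hQtop θ s a]
        · intro s a
          have : (fun θ : Fin m → ℝ => Q θ (H + 1) s a) = fun _ => 0 := by
            funext θ; exact hQtop θ s a
          rw [this]; exact differentiable_const 0
      · have hH : h ≤ H := by omega
        obtain ⟨⟨wf', hwf'⟩, hdiff'⟩ := ih (h + 1) (by omega) (by omega) (by omega)
        obtain ⟨wr, hwr⟩ := hr_lin h h1 hH
        constructor
        · refine ⟨fun θ => wr + Classical.choose (hBellman θ h h1 hH (wf' θ)),
            fun θ s a => ?_⟩
          have hspec := Classical.choose_spec (hBellman θ h h1 hH (wf' θ)) s a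
          rw [hQrec θ h h1 hH s a, dotProduct_add, hwr s a]
          congr 1
          rw [← hspec]
          refine Finset.sum_congr rfl fun s' _ => ?_
          congr 1
          exact Finset.sum_congr rfl fun a' _ => by rw [hwf' θ s' a']
        · intro s a
          have heq : (fun θ : Fin m → ℝ => Q θ h s a)
              = fun θ => r h s a
                + ∑ s', p h s a s' * ∑ a', π θ (h + 1) s' a' * Q θ (h + 1) s' a' := by
            funext θ; exact hQrec θ h h1 hH s a
          rw [heq]
          refine (differentiable_const _).add ?_
          refine Differentiable.fun_sum fun s' _ => Differentiable.const_mul ?_ _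
          exact Differentiable.fun_sum fun a' _ =>
            (hπ_diff (h + 1) s' a').mul (hdiff' s' a')
  intro h h1 h2
  obtain ⟨⟨wf0, hwf0⟩, hdiff⟩ := key (H + 1 - h) h h1 h2 le_rfl
  -- uniqueness helper
  have huniq : ∀ wf1 wf2 : (Fin m → ℝ) → Fin d → ℝ,
      (∀ θ s a, Q θ h s a = φ s a ⬝ᵥ wf1 θ) →
      (∀ θ s a, Q θ h s a = φ s a ⬝ᵥ wf2 θ) → wf1 = wf2 := by
    intro wf1 wf2 h1' h2'
    funext θ
    have : wf1 θ - wf2 θ = 0 := by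
      apply hφ_indep
      intro s a
      rw [dotProduct_sub, ← h1' θ s a, ← h2' θ s a, sub_self]
    exact sub_eq_zero.mp this
  refine ⟨⟨wf0, hwf0, fun wf hwf => huniq wf wf0 hwf hwf0⟩, ?_⟩
  intro wf hwf
  -- wf is differentiable via a linear left inverse
  have hwfdiff : Differentiable ℝ wf := by
    let T : (Fin d → ℝ) →ₗ[ℝ] (S × A → ℝ) :=
      { toFun := fun w => fun q => φ q.1 q.2 ⬝ᵥ w
        map_add' := fun x y => by funext q; simp [dotProduct_add]
        map_smul' := fun c x => by funext q; simp [dotProduct_smul] }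
    have hTker : LinearMap.ker T = ⊥ := by
      rw [LinearMap.ker_eq_bot']
      intro w hw
      apply hφ_indep
      intro s a
      exact congrFun hw (s, a)
    obtain ⟨L, hL⟩ := LinearMap.exists_leftInverse_of_injective T hTker
    have hrep : wf = fun θ => L.toContinuousLinearMap (fun q : S × A => Q θ h q.1 q.2) := by
      funext θ
      have h1'' : (fun q : S × A => Q θ h q.1 q.2) = T (wf θ) := by
        funext q; exact hwf θ q.1 q.2
      rw [h1'']
      have := congrFun (congrArg (fun f => f.toFun) hL) (wf θ)
      simpa using this.symm
    rw [hrep]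
    exact L.toContinuousLinearMap.differentiable.comp
      (differentiable_pi.mpr fun q => hdiff q.1 q.2)
  refine ⟨hwfdiff, ?_⟩
  intro j θ s a
  let clm : (Fin d → ℝ) →L[ℝ] ℝ :=
    LinearMap.toContinuousLinearMap
      { toFun := fun w => φ s a ⬝ᵥ w
        map_add' := fun x y => by simp [dotProduct_add]
        map_smul' := fun c x => by simp [dotProduct_smul] }
  have hQeq : (fun θ' => Q θ' h s a) = fun θ' => clm (wf θ') := by
    funext θ'; exact hwf θ' s a
  rw [hQeq]
  have hcomp : fderiv ℝ (fun θ' => clm (wf θ')) θ = clm.comp (fderiv ℝ wf θ) := by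
    rw [show (fun θ' => clm (wf θ')) = ⇑clm ∘ wf from rfl,
      fderiv_comp θ clm.differentiableAt (hwfdiff θ), clm.fderiv]
  rw [hcomp]
  rfl
end

section
/- Fix λ > 0 and d, K, H ∈ ℕ with K ≥ 1, and for each h ∈ {1,…,H} and k ∈ {1,…,K} let u_{h,k} ∈ ℝ^d, ρ_{h,k} ∈ ℝ, and z_{h,k} ∈ ℝ^d be given. The matrix Σ̂_h := (1/K)(λ I_d + ∑_{k=1}^K u_{h,k} u_{h,k}ᵀ) is positive definite; set ŵ_{r,h} := Σ̂_h^{-1} (1/K) ∑_{k=1}^K ρ_{h,k} u_{h,k} and M̂_h := Σ̂_h^{-1} (1/K) ∑_{k=1}^K u_{h,k} z_{h,k}ᵀ. Define the fitted iterates backwards by ŵ_{H+1}^{FPG} := 0 and, for h = H,…,1, ŵ_h^{FPG} := the unique global minimizer over w ∈ ℝ^d of ∑_{k=1}^K (u_{h,k}ᵀ w − ρ_{h,k} − z_{h,k}ᵀ ŵ_{h+1}^{FPG})² + λ‖w‖², and the model-based iterates by ŵ_{H+1}^{MB} := 0 and ŵ_h^{MB} := ŵ_{r,h} + M̂_h ŵ_{h+1}^{MB}.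 Then ŵ_h^{FPG} = ŵ_h^{MB} for every h ∈ {1,…,H+1}. -/
open Matrix Finset

private lemma vmv_mulVec {d : ℕ} (a b x : Fin d → ℝ) :
    vecMulVec a b *ᵥ x = (b ⬝ᵥ x) • a := by
  ext i
  simp only [mulVec, dotProduct, vecMulVec_apply, Pi.smul_apply, smul_eq_mul]
  rw [Finset.sum_mul]
  exact Finset.sum_congr rfl fun j _ => by ring

private lemma sum_mulVec' {d : ℕ} (s : Finset ℕ) (M : ℕ → Matrix (Fin d) (Fin d) ℝ)
    (x : Fin d → ℝ) : (∑ k ∈ s, M k) *ᵥ x = ∑ k ∈ s, M k *ᵥ x := by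
  ext i
  simp only [mulVec, dotProduct, Finset.sum_apply, Matrix.sum_apply, Finset.sum_mul]
  exact Finset.sum_comm

private lemma sum_dotProduct' {d : ℕ} (s : Finset ℕ) (f : ℕ → Fin d → ℝ) (x : Fin d → ℝ) :
    (∑ k ∈ s, f k) ⬝ᵥ x = ∑ k ∈ s, f k ⬝ᵥ x := by
  simp only [dotProduct, Finset.sum_apply, Finset.sum_mul]
  exact Finset.sum_comm

private lemma sq_sum_pos {d : ℕ} {v : Fin d → ℝ} (hv : v ≠ 0) : 0 < ∑ i, v i ^ 2 := by
  rcases Function.ne_iff.1 hv with ⟨i, hi⟩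
  have hi' : v i ≠ 0 := by simpa using hi
  have : (0 : ℝ) < v i ^ 2 := by positivity
  have hle : v i ^ 2 ≤ ∑ j, v j ^ 2 :=
    Finset.single_le_sum (fun j _ => sq_nonneg (v j)) (Finset.mem_univ i)
  linarith

theorem fpg_equals_model_based (d K H : ℕ) (hK : 1 ≤ K) (lam : ℝ) (hlam : 0 < lam)
    (u : ℕ → ℕ → Fin d → ℝ) (ρ : ℕ → ℕ → ℝ) (z : ℕ → ℕ → Fin d → ℝ)
    (Shat : ℕ → Matrix (Fin d) (Fin d) ℝ)
    (hShat : ∀ h, Shat h = (K : ℝ)⁻¹ •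
      (lam • (1 : Matrix (Fin d) (Fin d) ℝ) + ∑ k ∈ Icc 1 K, vecMulVec (u h k) (u h k)))
    (wr : ℕ → Fin d → ℝ)
    (hwr : ∀ h, wr h = (Shat h)⁻¹ *ᵥ ((K : ℝ)⁻¹ • ∑ k ∈ Icc 1 K, ρ h k • u h k))
    (Mhat : ℕ → Matrix (Fin d) (Fin d) ℝ)
    (hMhat : ∀ h, Mhat h =
      (Shat h)⁻¹ * ((K : ℝ)⁻¹ • ∑ k ∈ Icc 1 K, vecMulVec (u h k) (z h k)))
    (wFPG : ℕ → Fin d → ℝ)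
    (hFPGtop : wFPG (H + 1) = 0)
    (hFPGmin : ∀ h, 1 ≤ h → h ≤ H → ∀ w : Fin d → ℝ,
      (∑ k ∈ Icc 1 K, (u h k ⬝ᵥ wFPG h - ρ h k - z h k ⬝ᵥ wFPG (h + 1)) ^ 2)
          + lam * ∑ i, wFPG h i ^ 2
        ≤ (∑ k ∈ Icc 1 K, (u h k ⬝ᵥ w - ρ h k - z h k ⬝ᵥ wFPG (h + 1)) ^ 2)
          + lam * ∑ i, w i ^ 2)
    (wMB : ℕ → Fin d → ℝ)
    (hMBtop : wMB (H + 1) = 0)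
    (hMBrec : ∀ h, 1 ≤ h → h ≤ H → wMB h = wr h + Mhat h *ᵥ wMB (h + 1)) :
    (∀ h, 1 ≤ h → h ≤ H → (Shat h).PosDef) ∧
      ∀ h, 1 ≤ h → h ≤ H + 1 → wFPG h = wMB h := by
  have hK0 : (K : ℝ) ≠ 0 := Nat.cast_ne_zero.mpr (by omega)
  have hKinv : (0 : ℝ) < (K : ℝ)⁻¹ := by positivity
  -- quadratic form of the unnormalized matrix
  have hquad : ∀ h (x : Fin d → ℝ),
      x ⬝ᵥ (Shat h *ᵥ x) =
        (K : ℝ)⁻¹ * (lam * (x ⬝ᵥ x) + ∑ k ∈ Icc 1 K, (u h k ⬝ᵥ x) ^ 2) := by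
    intro h x
    rw [hShat h, smul_mulVec, dotProduct_smul, add_mulVec, smul_mulVec,
      one_mulVec, sum_mulVec', dotProduct_add, dotProduct_smul,
      dotProduct_comm x (∑ k ∈ Icc 1 K, vecMulVec (u h k) (u h k) *ᵥ x), sum_dotProduct']
    simp only [smul_eq_mul]
    congr 1
    congr 1
    refine Finset.sum_congr rfl fun k _ => ?_
    rw [vmv_mulVec, smul_dotProduct, smul_eq_mul, dotProduct_comm (u h k) x]
    ring
  -- positive definiteness
  have hPD : ∀ h, (Shat h).PosDef := by
    intro h
    refine Matrix.PosDef.of_dotProduct_mulVec_pos ?_ ?_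
    · show _ᴴ = _
      rw [hShat h]
      ext i j
      simp only [conjTranspose_apply, Matrix.smul_apply, Matrix.add_apply, Matrix.sum_apply,
        Matrix.one_apply, vecMulVec_apply, star_trivial, smul_eq_mul]
      have hone : (if j = i then (1:ℝ) else 0) = if i = j then 1 else 0 := by
        by_cases hij : i = j <;> simp [hij, eq_comm]
      rw [hone]
      congr 2
      exact Finset.sum_congr rfl fun k _ => by ring
    · intro x hx
      have hx' : star x = x := by simp
      rw [hx', hquad]
      have h1 : 0 < x ⬝ᵥ x := by
        have : x ⬝ᵥ x = ∑ i, x i ^ 2 := by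
          simp [dotProduct, sq]
        rw [this]; exact sq_sum_pos hx
      have h2 : 0 ≤ ∑ k ∈ Icc 1 K, (u h k ⬝ᵥ x) ^ 2 :=
        Finset.sum_nonneg fun k _ => sq_nonneg _
      have := mul_pos hlam h1
      positivity
  have hUdet : ∀ h, IsUnit (Shat h).det := fun h => (hPD h).det_pos.ne'.isUnit
  refine ⟨fun h _ _ => hPD h, ?_⟩
  -- downward induction
  have key : ∀ j h, h + j = H + 1 → 1 ≤ h → wFPG h = wMB h := by
    intro j
    induction j with
    | zero =>
      intro h hh _
      have : h = H + 1 := by omega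
      rw [this, hFPGtop, hMBtop]
    | succ j ih =>
      intro h hh h1
      have hnext : wFPG (h + 1) = wMB (h + 1) := ih (h + 1) (by omega) (by omega)
      have h2 : h ≤ H := by omega
      -- the model-based vector satisfies the normal equations
      set m := wMB (h + 1) with hm
      set w₀ := wMB h with hw₀
      have hSw : Shat h *ᵥ w₀ =
          ((K : ℝ)⁻¹ • ∑ k ∈ Icc 1 K, ρ h k • u h k) +
            ((K : ℝ)⁻¹ • ∑ k ∈ Icc 1 K, vecMulVec (u h k) (z h k)) *ᵥ m := by
        rw [hw₀, hMBrec h h1 h2, mulVec_add, hwr, hMhat, mulVec_mulVec, mulVec_mulVec,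
          Matrix.mul_nonsing_inv _ (hUdet h), one_mulVec, ← Matrix.mul_assoc,
          Matrix.mul_nonsing_inv _ (hUdet h), Matrix.one_mul]
      -- vector form of the normal equations
      have hvec : lam • w₀ + ∑ k ∈ Icc 1 K, (u h k ⬝ᵥ w₀) • u h k =
          ∑ k ∈ Icc 1 K, (ρ h k + z h k ⬝ᵥ m) • u h k := by
        have h1' := congrArg (fun y => (K : ℝ) • y) hSw
        rw [hShat h, smul_mulVec, smul_smul, mul_inv_cancel₀ hK0, one_smul] at h1'
        rw [add_mulVec, smul_mulVec, one_mulVec, sum_mulVec'] at h1'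
        have hL : ∑ k ∈ Icc 1 K, vecMulVec (u h k) (u h k) *ᵥ w₀ =
            ∑ k ∈ Icc 1 K, (u h k ⬝ᵥ w₀) • u h k :=
          Finset.sum_congr rfl fun k _ => vmv_mulVec _ _ _
        rw [hL] at h1'
        rw [h1', smul_add, smul_smul, mul_inv_cancel₀ hK0, one_smul, smul_mulVec,
          smul_smul, mul_inv_cancel₀ hK0, one_smul, sum_mulVec']
        have hR : ∑ k ∈ Icc 1 K, vecMulVec (u h k) (z h k) *ᵥ m =
            ∑ k ∈ Icc 1 K, (z h k ⬝ᵥ m) • u h k :=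
          Finset.sum_congr rfl fun k _ => vmv_mulVec _ _ _
        rw [hR, ← Finset.sum_add_distrib]
        exact Finset.sum_congr rfl fun k _ => by rw [add_smul]
      -- scalar form of the normal equations
      have hscal : ∀ v : Fin d → ℝ,
          lam * (w₀ ⬝ᵥ v) + ∑ k ∈ Icc 1 K, (u h k ⬝ᵥ w₀) * (u h k ⬝ᵥ v) =
            ∑ k ∈ Icc 1 K, (ρ h k + z h k ⬝ᵥ m) * (u h k ⬝ᵥ v) := by
        intro v
        have := congrArg (fun y => y ⬝ᵥ v) hvec
        simpa only [add_dotProduct, smul_dotProduct, smul_eq_mul, sum_dotProduct'] using this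
      -- now conclude from the minimality
      set e := wFPG h with he
      set v := e - w₀ with hv
      have hev : e = w₀ + v := by rw [hv]; abel
      have hmin := hFPGmin h h1 h2 w₀
      rw [hnext, ← he] at hmin
      -- expand the objective at e
      have hdotw : w₀ ⬝ᵥ v = ∑ i, w₀ i * v i := rfl
      have hexp1 : ∑ k ∈ Icc 1 K, (u h k ⬝ᵥ e - ρ h k - z h k ⬝ᵥ m) ^ 2 =
          ∑ k ∈ Icc 1 K, ((u h k ⬝ᵥ w₀ - ρ h k - z h k ⬝ᵥ m) ^ 2 + (u h k ⬝ᵥ v) ^ 2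
            + 2 * ((u h k ⬝ᵥ w₀ - (ρ h k + z h k ⬝ᵥ m)) * (u h k ⬝ᵥ v))) :=
        Finset.sum_congr rfl fun k _ => by rw [hev, dotProduct_add]; ring
      have hexp2 : ∑ i, e i ^ 2 =
          ∑ i, (w₀ i ^ 2 + v i ^ 2 + 2 * (w₀ i * v i)) :=
        Finset.sum_congr rfl fun i _ => by rw [hev]; simp only [Pi.add_apply]; ring
      have hcross : ∑ k ∈ Icc 1 K, ((u h k ⬝ᵥ w₀ - (ρ h k + z h k ⬝ᵥ m)) * (u h k ⬝ᵥ v))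
          + lam * ∑ i, w₀ i * v i = 0 := by
        have := hscal v
        rw [hdotw] at this
        have hsplit : ∑ k ∈ Icc 1 K, ((u h k ⬝ᵥ w₀ - (ρ h k + z h k ⬝ᵥ m)) * (u h k ⬝ᵥ v)) =
            ∑ k ∈ Icc 1 K, (u h k ⬝ᵥ w₀) * (u h k ⬝ᵥ v)
              - ∑ k ∈ Icc 1 K, (ρ h k + z h k ⬝ᵥ m) * (u h k ⬝ᵥ v) := by
          rw [← Finset.sum_sub_distrib]
          exact Finset.sum_congr rfl fun k _ => by ring
        rw [hsplit]
        linarith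
      have hQ : (∑ k ∈ Icc 1 K, (u h k ⬝ᵥ v) ^ 2) + lam * ∑ i, v i ^ 2 ≤ 0 := by
        rw [hexp1, hexp2] at hmin
        rw [Finset.sum_add_distrib, Finset.sum_add_distrib,
          Finset.sum_add_distrib, Finset.sum_add_distrib, ← Finset.mul_sum] at hmin
        rw [← Finset.mul_sum] at hmin
        nlinarith [hcross]
      have hv0 : v = 0 := by
        by_contra hvne
        have h1' : 0 < ∑ i, v i ^ 2 := sq_sum_pos hvne
        have h2' : 0 ≤ ∑ k ∈ Icc 1 K, (u h k ⬝ᵥ v) ^ 2 :=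
          Finset.sum_nonneg fun k _ => sq_nonneg _
        nlinarith
      have : e = w₀ := by rwa [sub_eq_zero] at hv0
      exact this
  intro h h1 h2
  exact key (H + 1 - h) h (by omega) h1
end

section
/- Assume each map θ ↦ π_{θ,h}(s)(a) is differentiable on ℝ^m. Then for every h ∈ {1,…,H+1} and (s,a) ∈ S × A the map θ ↦ Q_h^θ(s,a) is differentiable, and the Policy Gradient Bellman equation holds: for every j ∈ {1,…,m}, every h ∈ {1,…,H}, and all (s,a), ∂Q_h^θ(s,a)/∂θ_j = ∑_{s'} p_h(s,a)(s') ∑_{a'} [ (∂π_{θ,h+1}(s')(a')/∂θ_j) · Q_{h+1}^θ(s',a') + π_{θ,h+1}(s')(a') · (∂Q_{h+1}^θ(s',a')/∂θ_j) ]. -/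
open Finset

theorem policy_gradient_bellman_equation
    {S A : Type*} [Fintype S] [Fintype A] [Nonempty S] [Nonempty A]
    (m H : ℕ)
    (p : ℕ → S → A → S → ℝ) (r : ℕ → S → A → ℝ)
    (π : (Fin m → ℝ) → ℕ → S → A → ℝ)
    (hp_nonneg : ∀ h, 1 ≤ h → h ≤ H → ∀ s a s', 0 ≤ p h s a s')
    (hp_sum : ∀ h, 1 ≤ h → h ≤ H → ∀ s a, ∑ s', p h s a s' = 1)
    (hπ_nonneg : ∀ θ h, 1 ≤ h → h ≤ H + 1 → ∀ s a, 0 ≤ π θ h s a)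
    (hπ_sum : ∀ θ h, 1 ≤ h → h ≤ H + 1 → ∀ s, ∑ a, π θ h s a = 1)
    (hπ_diff : ∀ h s a, Differentiable ℝ fun θ => π θ h s a)
    (Q : (Fin m → ℝ) → ℕ → S → A → ℝ)
    (hQtop : ∀ θ s a, Q θ (H + 1) s a = 0)
    (hQrec : ∀ θ h, 1 ≤ h → h ≤ H → ∀ s a,
      Q θ h s a = r h s a
        + ∑ s', p h s a s' * ∑ a', π θ (h + 1) s' a' * Q θ (h + 1) s' a') :
    (∀ h, 1 ≤ h → h ≤ H + 1 → ∀ s a, Differentiable ℝ fun θ => Q θ h s a) ∧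
      ∀ (j : Fin m) (θ : Fin m → ℝ) (h : ℕ), 1 ≤ h → h ≤ H → ∀ s a,
        fderiv ℝ (fun θ' => Q θ' h s a) θ (Pi.single j 1) =
          ∑ s', p h s a s' * ∑ a',
            (fderiv ℝ (fun θ' => π θ' (h + 1) s' a') θ (Pi.single j 1)
                * Q θ (h + 1) s' a'
              + π θ (h + 1) s' a'
                * fderiv ℝ (fun θ' => Q θ' (h + 1) s' a') θ (Pi.single j 1)) := by

  classical
  have hdiff : ∀ d h, 1 ≤ h → h + d = H + 1 → ∀ s a,
      Differentiable ℝ fun θ => Q θ h s a := by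
    intro d
    induction d with
    | zero =>
      intro h h1 hd s a
      have hh : h = H + 1 := by omega
      subst hh
      have : (fun θ => Q θ (H + 1) s a) = fun _ => (0 : ℝ) :=
        funext fun θ => hQtop θ s a
      rw [this]
      exact differentiable_const 0
    | succ d ih =>
      intro h h1 hd s a
      have hH : h ≤ H := by omega
      have ih' : ∀ s a, Differentiable ℝ fun θ => Q θ (h + 1) s a :=
        ih (h + 1) (by omega) (by omega)
      have heq : (fun θ => Q θ h s a) =
          fun θ => r h s a + ∑ s', p h s a s' *
            ∑ a', π θ (h + 1) s' a' * Q θ (h + 1) s' a' :=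
        funext fun θ => hQrec θ h h1 hH s a
      rw [heq]
      apply Differentiable.const_add
      apply Differentiable.fun_sum
      intro s' _
      apply Differentiable.const_mul
      apply Differentiable.fun_sum
      intro a' _
      exact (hπ_diff _ _ _).mul (ih' _ _)
  have hdiff' : ∀ h, 1 ≤ h → h ≤ H + 1 → ∀ s a,
      Differentiable ℝ fun θ => Q θ h s a :=
    fun h h1 h2 => hdiff (H + 1 - h) h h1 (by omega)
  refine ⟨hdiff', ?_⟩
  intro j θ h h1 h2 s a
  have hQd : ∀ s a, Differentiable ℝ fun θ => Q θ (h + 1) s a :=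
    hdiff' (h + 1) (by omega) (by omega)
  have heq : (fun θ' => Q θ' h s a) =
      fun θ' => r h s a + ∑ s', p h s a s' *
        ∑ a', π θ' (h + 1) s' a' * Q θ' (h + 1) s' a' :=
    funext fun θ' => hQrec θ' h h1 h2 s a
  have hinner : ∀ s' a', DifferentiableAt ℝ
      (fun θ' => π θ' (h + 1) s' a' * Q θ' (h + 1) s' a') θ :=
    fun s' a' => ((hπ_diff _ _ _).mul (hQd _ _)) θ
  have hterm : ∀ s', DifferentiableAt ℝ
      (fun θ' => ∑ a', π θ' (h + 1) s' a' * Q θ' (h + 1) s' a') θ :=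
    fun s' => DifferentiableAt.fun_sum fun a' _ => hinner s' a'
  rw [heq, fderiv_const_add, fderiv_fun_sum (fun s' _ => (hterm s').const_mul _)]
  rw [ContinuousLinearMap.sum_apply]
  refine Finset.sum_congr rfl fun s' _ => ?_
  rw [fderiv_const_mul (hterm s'), ContinuousLinearMap.smul_apply, smul_eq_mul]
  congr 1
  rw [fderiv_fun_sum (fun a' _ => hinner s' a'), ContinuousLinearMap.sum_apply]
  refine Finset.sum_congr rfl fun a' _ => ?_
  rw [fderiv_fun_mul ((hπ_diff _ _ _) θ) ((hQd _ _) θ)]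
  simp [ContinuousLinearMap.add_apply, ContinuousLinearMap.smul_apply, smul_eq_mul]
  ring
end

section
/- Let V be a vector space over ℝ, H ∈ ℕ, and for each h ∈ {1,…,H} let P_h, P̂_h : V → V be linear maps and u_h, û_h ∈ V. Define Q_{H+1} := 0 and Q_h := u_h + P_h(Q_{h+1}) for h = H,…,1, and likewise Q̂_{H+1} := 0 and Q̂_h := û_h + P̂_h(Q̂_{h+1}). Then for every h ∈ {1,…,H+1}, Q_h − Q̂_h = ∑_{h'=h}^{H} (P̂_h ∘ P̂_{h+1} ∘ ⋯ ∘ P̂_{h'-1}) (Q_{h'} − û_{h'} − P̂_{h'}(Q_{h'+1})), where the composition over an empty index range (the case h' = h) is the identity map. -/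
/-- The composition `P h ∘ P (h+1) ∘ ⋯ ∘ P (h'-1)`, equal to the identity map when `h' ≤ h`. -/
noncomputable def compRange {V : Type*} [AddCommGroup V] [Module ℝ V]
    (P : ℕ → V →ₗ[ℝ] V) (h h' : ℕ) : V →ₗ[ℝ] V :=
  (List.range (h' - h)).foldr (fun i acc => (P (h + i)).comp acc) LinearMap.id

lemma compRange_self {V : Type*} [AddCommGroup V] [Module ℝ V]
    (P : ℕ → V →ₗ[ℝ] V) (h : ℕ) : compRange P h h = LinearMap.id := by
  simp [compRange]

lemma compRange_cons {V : Type*} [AddCommGroup V] [Module ℝ V]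
    (P : ℕ → V →ₗ[ℝ] V) (h h' : ℕ) (hlt : h < h') :
    compRange P h h' = (P h).comp (compRange P (h + 1) h') := by
  unfold compRange
  obtain ⟨n, hn⟩ : ∃ n, h' - h = n + 1 := ⟨h' - h - 1, by omega⟩
  have hn' : h' - (h + 1) = n := by omega
  rw [hn, hn', List.range_succ_eq_map, List.foldr_cons, List.foldr_map]
  have e : (fun (x : ℕ) (y : V →ₗ[ℝ] V) => (P (h + (x + 1))).comp y)
      = fun i acc => (P (h + 1 + i)).comp acc := by
    funext x y
    rw [show h + (x + 1) = h + 1 + x from by omega]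
  rw [e, Nat.add_zero]

theorem backward_linear_recursion_error_decomposition
    {V : Type*} [AddCommGroup V] [Module ℝ V] (H : ℕ)
    (P Phat : ℕ → V →ₗ[ℝ] V) (u uhat : ℕ → V) (Q Qhat : ℕ → V)
    (hQtop : Q (H + 1) = 0)
    (hQrec : ∀ h, 1 ≤ h → h ≤ H → Q h = u h + P h (Q (h + 1)))
    (hQhattop : Qhat (H + 1) = 0)
    (hQhatrec : ∀ h, 1 ≤ h → h ≤ H → Qhat h = uhat h + Phat h (Qhat (h + 1))) :
    ∀ h, 1 ≤ h → h ≤ H + 1 →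
      Q h - Qhat h =
        ∑ h' ∈ Finset.Icc h H,
          compRange Phat h h' (Q h' - uhat h' - Phat h' (Q (h' + 1))) := by
  suffices key : ∀ n h, h + n = H + 1 → 1 ≤ h →
      Q h - Qhat h =
        ∑ h' ∈ Finset.Icc h H,
          compRange Phat h h' (Q h' - uhat h' - Phat h' (Q (h' + 1))) by
    intro h h1 h2
    exact key (H + 1 - h) h (by omega) h1
  intro n
  induction n with
  | zero =>
    intro h hh _
    have : h = H + 1 := by omega
    subst this
    rw [hQtop, hQhattop, Finset.Icc_eq_empty (by omega)]
    simp
  | succ n ih =>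
    intro h hh h1
    have hhH : h ≤ H := by omega
    have ih' := ih (h + 1) (by omega) (by omega)
    rw [Finset.Icc_eq_cons_Ioc hhH, Finset.sum_cons, ← Finset.Icc_add_one_left_eq_Ioc]
    have hsum : ∑ h' ∈ Finset.Icc (h + 1) H,
        compRange Phat h h' (Q h' - uhat h' - Phat h' (Q (h' + 1)))
        = Phat h (Q (h + 1) - Qhat (h + 1)) := by
      rw [ih', map_sum]
      refine Finset.sum_congr rfl fun h' hh' => ?_
      rw [compRange_cons Phat h h' (by
        simp only [Finset.mem_Icc] at hh'; omega)]
      rfl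
    rw [hsum, compRange_self, hQrec h h1 hhH, hQhatrec h h1 hhH]
    simp only [LinearMap.id_coe, id_eq, map_sub]
    abel
end

section
/- Assume 0 ≤ r_h(s,a) ≤ 1 for all h, s, a; assume each map θ ↦ π_{θ,h}(s)(a) is differentiable, and there is G ≥ 0 such that |∂π_{θ,h}(s)(a)/∂θ_j| ≤ G · π_{θ,h}(s)(a) for all θ, h, s, a, and j ∈ {1,…,m}. Then for every θ ∈ ℝ^m, every h ∈ {1,…,H+1}, and all (s,a): 0 ≤ Q_h^θ(s,a) ≤ H − h + 1, and |∂Q_h^θ(s,a)/∂θ_j| ≤ G (H − h)² for every j ∈ {1,…,m}. -/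
open Finset

theorem q_function_and_gradient_bounds
    {S A : Type*} [Fintype S] [Fintype A] [Nonempty S] [Nonempty A]
    (m H : ℕ)
    (p : ℕ → S → A → S → ℝ) (r : ℕ → S → A → ℝ)
    (π : (Fin m → ℝ) → ℕ → S → A → ℝ)
    (hp_nonneg : ∀ h, 1 ≤ h → h ≤ H → ∀ s a s', 0 ≤ p h s a s')
    (hp_sum : ∀ h, 1 ≤ h → h ≤ H → ∀ s a, ∑ s', p h s a s' = 1)
    (hπ_nonneg : ∀ θ h, 1 ≤ h → h ≤ H + 1 → ∀ s a, 0 ≤ π θ h s a)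
    (hπ_sum : ∀ θ h, 1 ≤ h → h ≤ H + 1 → ∀ s, ∑ a, π θ h s a = 1)
    (hr_nonneg : ∀ h, 1 ≤ h → h ≤ H → ∀ s a, 0 ≤ r h s a)
    (hr_le_one : ∀ h, 1 ≤ h → h ≤ H → ∀ s a, r h s a ≤ 1)
    (hπ_diff : ∀ h s a, Differentiable ℝ fun θ => π θ h s a)
    (G : ℝ) (hG : 0 ≤ G)
    (hπ_grad : ∀ (θ : Fin m → ℝ) (h : ℕ), 1 ≤ h → h ≤ H + 1 → ∀ s a (j : Fin m),
      |fderiv ℝ (fun θ' => π θ' h s a) θ (Pi.single j 1)| ≤ G * π θ h s a)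
    (Q : (Fin m → ℝ) → ℕ → S → A → ℝ)
    (hQtop : ∀ θ s a, Q θ (H + 1) s a = 0)
    (hQrec : ∀ θ h, 1 ≤ h → h ≤ H → ∀ s a,
      Q θ h s a = r h s a
        + ∑ s', p h s a s' * ∑ a', π θ (h + 1) s' a' * Q θ (h + 1) s' a') :
    ∀ (θ : Fin m → ℝ) (h : ℕ), 1 ≤ h → h ≤ H + 1 → ∀ s a,
      0 ≤ Q θ h s a ∧ Q θ h s a ≤ (H : ℝ) - h + 1 ∧
        ∀ j : Fin m,
          |fderiv ℝ (fun θ' => Q θ' h s a) θ (Pi.single j 1)| ≤ G * ((H : ℝ) - h) ^ 2 := by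
  classical
  have keytop : ∀ (s : S) (a : A), (fun θ : Fin m → ℝ => Q θ (H+1) s a) = fun _ => (0:ℝ) :=
    fun s a => funext fun θ => hQtop θ s a
  suffices key : ∀ d h, h + d = H + 1 → 1 ≤ h →
      (∀ (θ : Fin m → ℝ) (s : S) (a : A), 0 ≤ Q θ h s a) ∧
      (∀ (θ : Fin m → ℝ) (s : S) (a : A), Q θ h s a ≤ ((H + 1 - h : ℕ) : ℝ)) ∧
      (∀ (s : S) (a : A), Differentiable ℝ fun θ => Q θ h s a) ∧
      (∀ (θ : Fin m → ℝ) (s : S) (a : A) (j : Fin m),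
        |fderiv ℝ (fun θ' => Q θ' h s a) θ (Pi.single j 1)| ≤ G * ((H - h : ℕ) : ℝ)^2) by
    intro θ h h1 hh s a
    obtain ⟨ha, hb, hc, hdrv⟩ := key (H + 1 - h) h (by omega) h1
    refine ⟨ha θ s a, ?_, ?_⟩
    · have := hb θ s a
      rwa [show ((H + 1 - h : ℕ) : ℝ) = (H:ℝ) - h + 1 by
        rw [Nat.cast_sub (by omega)]; push_cast; ring] at this
    · intro j
      refine (hdrv θ s a j).trans ?_
      rcases Nat.lt_or_ge h (H+1) with hlt | hge
      · rw [Nat.cast_sub (by omega)]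
      · have : h = H + 1 := by omega
        subst this
        have h0 : H - (H + 1) = 0 := by omega
        rw [h0]
        push_cast
        nlinarith [sq_nonneg ((H:ℝ) - (H+1)), hG]
  intro d
  induction d with
  | zero =>
    intro h hd h1
    have hh : h = H + 1 := by omega
    subst hh
    refine ⟨fun θ s a => by rw [hQtop], fun θ s a => by rw [hQtop]; positivity,
      fun s a => by rw [keytop s a]; exact differentiable_const 0, fun θ s a j => ?_⟩
    rw [keytop s a]
    simp [fderiv_const]
  | succ d ih =>
    intro h hd h1
    have hhH : h ≤ H := by omega
    obtain ⟨ih_a, ih_b, ih_c, ih_d⟩ := ih (h+1) (by omega) (by omega)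
    have hπn : ∀ (θ : Fin m → ℝ) (s : S) (a : A), 0 ≤ π θ (h+1) s a :=
      fun θ s a => hπ_nonneg θ (h+1) (by omega) (by omega) s a
    have hπs : ∀ (θ : Fin m → ℝ) (s : S), ∑ a, π θ (h+1) s a = 1 :=
      fun θ s => hπ_sum θ (h+1) (by omega) (by omega) s
    have hpn : ∀ (s : S) (a : A) (s' : S), 0 ≤ p h s a s' := hp_nonneg h h1 hhH
    have hps : ∀ (s : S) (a : A), ∑ s', p h s a s' = 1 := hp_sum h h1 hhH
    have hF : ∀ (s : S) (a : A), (fun θ : Fin m → ℝ => Q θ h s a)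
        = fun θ => r h s a + ∑ s', p h s a s' * ∑ a', π θ (h + 1) s' a' * Q θ (h + 1) s' a' :=
      fun s a => funext fun θ => hQrec θ h h1 hhH s a
    -- notation for bounds
    set n : ℝ := ((H - h : ℕ) : ℝ) with hn_def
    set c : ℝ := ((H - (h+1) : ℕ) : ℝ) with hc_def
    have hn_nonneg : 0 ≤ n := Nat.cast_nonneg _
    have hc_nonneg : 0 ≤ c := Nat.cast_nonneg _
    have hb_cast : ((H + 1 - (h+1) : ℕ) : ℝ) = n := by rw [hn_def]; congr 1; omega
    have hQb : ∀ (θ : Fin m → ℝ) (s : S) (a : A), Q θ (h+1) s a ≤ n := by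
      intro θ s a; have := ih_b θ s a; rwa [hb_cast] at this
    have harith : c ^ 2 + n ≤ n ^ 2 := by
      rcases Nat.lt_or_ge h H with hlt | hge
      · have h1' : H - h = (H - (h+1)) + 1 := by omega
        have : n = c + 1 := by rw [hn_def, hc_def, h1']; push_cast; ring
        nlinarith
      · have hHh : h = H := by omega
        have hn0 : n = 0 := by rw [hn_def, hHh]; simp
        have hc0 : c = 0 := by rw [hc_def, hHh]; simp
        rw [hn0, hc0]; norm_num
    have hinner_le : ∀ (θ : Fin m → ℝ) (s' : S),
        ∑ a', π θ (h+1) s' a' * Q θ (h+1) s' a' ≤ n := by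
      intro θ s'
      calc ∑ a', π θ (h+1) s' a' * Q θ (h+1) s' a'
          ≤ ∑ a', π θ (h+1) s' a' * n :=
            Finset.sum_le_sum fun a' _ =>
              mul_le_mul_of_nonneg_left (hQb θ s' a') (hπn θ s' a')
        _ = n := by rw [← Finset.sum_mul, hπs, one_mul]
    have hinner_nonneg : ∀ (θ : Fin m → ℝ) (s' : S),
        0 ≤ ∑ a', π θ (h+1) s' a' * Q θ (h+1) s' a' :=
      fun θ s' => Finset.sum_nonneg fun a' _ => mul_nonneg (hπn θ s' a') (ih_a θ s' a')
    refine ⟨?_, ?_, ?_, ?_⟩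
    · intro θ s a
      rw [hQrec θ h h1 hhH]
      exact add_nonneg (hr_nonneg h h1 hhH s a)
        (Finset.sum_nonneg fun s' _ => mul_nonneg (hpn s a s') (hinner_nonneg θ s'))
    · intro θ s a
      rw [hQrec θ h h1 hhH]
      have hcast : ((H + 1 - h : ℕ) : ℝ) = 1 + n := by
        rw [hn_def, show H + 1 - h = (H - h) + 1 by omega]; push_cast; ring
      rw [hcast]
      have hsum : ∑ s', p h s a s' * ∑ a', π θ (h+1) s' a' * Q θ (h+1) s' a' ≤ n := by
        calc ∑ s', p h s a s' * ∑ a', π θ (h+1) s' a' * Q θ (h+1) s' a'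
            ≤ ∑ s', p h s a s' * n :=
              Finset.sum_le_sum fun s' _ =>
                mul_le_mul_of_nonneg_left (hinner_le θ s') (hpn s a s')
          _ = n := by rw [← Finset.sum_mul, hps, one_mul]
      linarith [hr_le_one h h1 hhH s a]
    · intro s a
      rw [hF s a]
      exact (differentiable_const _).add (Differentiable.fun_sum fun s' _ =>
        Differentiable.const_mul (Differentiable.fun_sum fun a' _ =>
          (hπ_diff (h+1) s' a').fun_mul (ih_c s' a')) _)
    · intro θ s a j
      have hdiffInner : ∀ s' : S, DifferentiableAt ℝ
          (fun θ' : Fin m → ℝ => ∑ a', π θ' (h+1) s' a' * Q θ' (h+1) s' a') θ :=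
        fun s' => DifferentiableAt.fun_sum fun a' _ =>
          ((hπ_diff (h+1) s' a') θ).fun_mul ((ih_c s' a') θ)
      have hder : fderiv ℝ (fun θ' => Q θ' h s a) θ
          = ∑ s', p h s a s' •
              ∑ a', (π θ (h+1) s' a' • fderiv ℝ (fun θ' => Q θ' (h+1) s' a') θ
                + Q θ (h+1) s' a' • fderiv ℝ (fun θ' => π θ' (h+1) s' a') θ) := by
        rw [hF s a, fderiv_const_add,
          fderiv_fun_sum (fun s' _ => (hdiffInner s').const_mul _)]
        refine Finset.sum_congr rfl fun s' _ => ?_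
        rw [fderiv_const_mul (hdiffInner s'),
          fderiv_fun_sum (fun a' _ => ((hπ_diff (h+1) s' a') θ).fun_mul ((ih_c s' a') θ))]
        congr 1
        refine Finset.sum_congr rfl fun a' _ => ?_
        rw [fderiv_fun_mul ((hπ_diff (h+1) s' a') θ) ((ih_c s' a') θ)]
      rw [hder]
      simp only [ContinuousLinearMap.sum_apply, ContinuousLinearMap.smul_apply,
        ContinuousLinearMap.add_apply, smul_eq_mul]
      have hterm : ∀ (s' : S) (a' : A),
          |π θ (h+1) s' a' * fderiv ℝ (fun θ' => Q θ' (h+1) s' a') θ (Pi.single j 1)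
            + Q θ (h+1) s' a' * fderiv ℝ (fun θ' => π θ' (h+1) s' a') θ (Pi.single j 1)|
          ≤ π θ (h+1) s' a' * (G * c ^ 2 + G * n) := by
        intro s' a'
        have h1' : |π θ (h+1) s' a' * fderiv ℝ (fun θ' => Q θ' (h+1) s' a') θ (Pi.single j 1)|
            ≤ π θ (h+1) s' a' * (G * c ^ 2) := by
          rw [abs_mul, abs_of_nonneg (hπn θ s' a')]
          exact mul_le_mul_of_nonneg_left (ih_d θ s' a' j) (hπn θ s' a')
        have h2' : |Q θ (h+1) s' a' * fderiv ℝ (fun θ' => π θ' (h+1) s' a') θ (Pi.single j 1)|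
            ≤ π θ (h+1) s' a' * (G * n) := by
          rw [abs_mul, abs_of_nonneg (ih_a θ s' a')]
          calc Q θ (h+1) s' a' * |fderiv ℝ (fun θ' => π θ' (h+1) s' a') θ (Pi.single j 1)|
              ≤ Q θ (h+1) s' a' * (G * π θ (h+1) s' a') :=
                mul_le_mul_of_nonneg_left
                  (hπ_grad θ (h+1) (by omega) (by omega) s' a' j) (ih_a θ s' a')
            _ ≤ n * (G * π θ (h+1) s' a') :=
                mul_le_mul_of_nonneg_right (hQb θ s' a')
                  (mul_nonneg hG (hπn θ s' a'))
            _ = π θ (h+1) s' a' * (G * n) := by ring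
        calc _ ≤ _ := abs_add_le _ _
          _ ≤ π θ (h+1) s' a' * (G * c ^ 2) + π θ (h+1) s' a' * (G * n) :=
              add_le_add h1' h2'
          _ = π θ (h+1) s' a' * (G * c ^ 2 + G * n) := by ring
      have hinnerabs : ∀ s' : S,
          |∑ a', (π θ (h+1) s' a' * fderiv ℝ (fun θ' => Q θ' (h+1) s' a') θ (Pi.single j 1)
            + Q θ (h+1) s' a' * fderiv ℝ (fun θ' => π θ' (h+1) s' a') θ (Pi.single j 1))|
          ≤ G * c ^ 2 + G * n := by
        intro s'
        calc |∑ a', (π θ (h+1) s' a' * fderiv ℝ (fun θ' => Q θ' (h+1) s' a') θ (Pi.single j 1)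
              + Q θ (h+1) s' a' * fderiv ℝ (fun θ' => π θ' (h+1) s' a') θ (Pi.single j 1))|
            ≤ ∑ a', |π θ (h+1) s' a' * fderiv ℝ (fun θ' => Q θ' (h+1) s' a') θ (Pi.single j 1)
              + Q θ (h+1) s' a' * fderiv ℝ (fun θ' => π θ' (h+1) s' a') θ (Pi.single j 1)| :=
              Finset.abs_sum_le_sum_abs _ _
          _ ≤ ∑ a', π θ (h+1) s' a' * (G * c ^ 2 + G * n) :=
              Finset.sum_le_sum fun a' _ => hterm s' a'
          _ = G * c ^ 2 + G * n := by rw [← Finset.sum_mul, hπs, one_mul]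
      calc |∑ s', p h s a s' *
            ∑ a', (π θ (h+1) s' a' * fderiv ℝ (fun θ' => Q θ' (h+1) s' a') θ (Pi.single j 1)
              + Q θ (h+1) s' a' * fderiv ℝ (fun θ' => π θ' (h+1) s' a') θ (Pi.single j 1))|
          ≤ ∑ s', |p h s a s' *
            ∑ a', (π θ (h+1) s' a' * fderiv ℝ (fun θ' => Q θ' (h+1) s' a') θ (Pi.single j 1)
              + Q θ (h+1) s' a' * fderiv ℝ (fun θ' => π θ' (h+1) s' a') θ (Pi.single j 1))| :=
            Finset.abs_sum_le_sum_abs _ _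
        _ ≤ ∑ s', p h s a s' * (G * c ^ 2 + G * n) := by
            refine Finset.sum_le_sum fun s' _ => ?_
            rw [abs_mul, abs_of_nonneg (hpn s a s')]
            exact mul_le_mul_of_nonneg_left (hinnerabs s') (hpn s a s')
        _ = G * c ^ 2 + G * n := by rw [← Finset.sum_mul, hps, one_mul]
        _ ≤ G * n ^ 2 := by nlinarith
end

section
/- In the tabular MDP setting, fix θ ∈ ℝ^m and an initial distribution ξ : S → ℝ with ξ(s) ≥ 0 and ∑_s ξ(s) = 1; define the occupancy measures μ_{θ,1}(s,a) := ξ(s) π_{θ,1}(s)(a) and μ_{θ,h+1}(s',a') := ∑_{s,a} μ_{θ,h}(s,a) p_h(s,a)(s') π_{θ,h+1}(s')(a'). Let φ : S × A → ℝ^d be a feature map and Σ_{θ,h} := ∑_{s,a} μ_{θ,h}(s,a) φ(s,a)φ(s,a)ᵀ. Fix h ∈ {1,…,H} and suppose Σ_{θ,h} and Σ_{θ,h+1} are positive definite. (a) If M is a real d×d matrix with φ(s,a)ᵀ M = ∑_{s'} p_h(s,a)(s') ∑_{a'} π_{θ,h+1}(s')(a') φ(s',a')ᵀ for all (s,a),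 then ‖Σ_{θ,h}^{1/2} M Σ_{θ,h+1}^{-1/2}‖ ≤ 1. (b) If G ≥ 0, c : S × A → ℝ satisfies |c(s',a')| ≤ G for all (s',a'), and N is a real d×d matrix with φ(s,a)ᵀ N = ∑_{s'} p_h(s,a)(s') ∑_{a'} π_{θ,h+1}(s')(a') c(s',a') φ(s',a')ᵀ for all (s,a), then ‖Σ_{θ,h}^{1/2} N Σ_{θ,h+1}^{-1/2}‖ ≤ G. -/
open Finset Matrix

/-- The spectral norm (ℓ²→ℓ² operator norm) of a real square matrix. -/
noncomputable def specNorm {d : ℕ} (A : Matrix (Fin d) (Fin d) ℝ) : ℝ :=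
  ‖Matrix.toEuclideanCLM (𝕜 := ℝ) A‖

open Classical in
/-- The positive semidefinite square root of a positive semidefinite real matrix
(junk value `0` on matrices that are not positive semidefinite). -/
noncomputable def msqrt {d : ℕ} (A : Matrix (Fin d) (Fin d) ℝ) : Matrix (Fin d) (Fin d) ℝ :=
  if h : A.PosSemidef then
    h.1.eigenvectorUnitary.1 * diagonal ((↑) ∘ (√·) ∘ h.1.eigenvalues) *
      (star h.1.eigenvectorUnitary : Matrix (Fin d) (Fin d) ℝ) else 0

namespace OccAux

variable {d : ℕ}

lemma dot_sum_mulVec {ι : Type*} (s : Finset ι) (C : ι → Matrix (Fin d) (Fin d) ℝ)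
    (u w : Fin d → ℝ) :
    u ⬝ᵥ (∑ i ∈ s, C i) *ᵥ w = ∑ i ∈ s, u ⬝ᵥ (C i) *ᵥ w := by
  classical
  induction s using Finset.induction with
  | empty => simp
  | insert a s hns ih => simp [Finset.sum_insert hns, Matrix.add_mulVec, dotProduct_add, ih]

lemma dot_smul_vecMulVec (r : ℝ) (f g u w : Fin d → ℝ) :
    u ⬝ᵥ (r • vecMulVec f g) *ᵥ w = r * (u ⬝ᵥ f) * (g ⬝ᵥ w) := by
  simp only [Matrix.mulVec, dotProduct, vecMulVec_apply, Matrix.smul_apply, smul_eq_mul,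
    Finset.mul_sum, Finset.sum_mul]
  rw [Finset.sum_comm]
  exact Finset.sum_congr rfl fun j _ => Finset.sum_congr rfl fun i _ => by ring

lemma dot_mv_mv (A B : Matrix (Fin d) (Fin d) ℝ) (x y : Fin d → ℝ) :
    (A *ᵥ x) ⬝ᵥ (B *ᵥ y) = x ⬝ᵥ (Aᵀ * B) *ᵥ y := by
  rw [Matrix.dotProduct_mulVec, Matrix.vecMul_mulVec, ← Matrix.dotProduct_mulVec]

lemma specNorm_le_of_bound (B : Matrix (Fin d) (Fin d) ℝ) {G : ℝ} (hG : 0 ≤ G)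
    (hb : ∀ x y : Fin d → ℝ, |x ⬝ᵥ B *ᵥ y| ≤ G * Real.sqrt (x ⬝ᵥ x) * Real.sqrt (y ⬝ᵥ y)) :
    specNorm B ≤ G := by
  refine ContinuousLinearMap.opNorm_le_bound _ hG fun v => ?_
  set y : Fin d → ℝ := WithLp.equiv 2 _ v with hy
  set x : Fin d → ℝ := B *ᵥ y with hx
  have hdx : 0 ≤ x ⬝ᵥ x := Finset.sum_nonneg fun i _ => mul_self_nonneg _
  have hTv : ‖(toEuclideanCLM (𝕜 := ℝ) B) v‖ = Real.sqrt (x ⬝ᵥ x) := by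
    rw [EuclideanSpace.norm_eq]
    congr 1
    refine Finset.sum_congr rfl fun i _ => ?_
    rw [Real.norm_eq_abs, sq_abs]
    have h1 := congrFun (Matrix.ofLp_toEuclideanCLM (𝕜 := ℝ) B v) i
    rw [← WithLp.equiv_apply 2 (Fin d → ℝ) v] at h1
    rw [h1, hx, hy, sq]
  have hv : ‖v‖ = Real.sqrt (y ⬝ᵥ y) := by
    rw [EuclideanSpace.norm_eq]
    congr 1
    refine Finset.sum_congr rfl fun i _ => ?_
    rw [Real.norm_eq_abs, sq_abs, hy, WithLp.equiv_apply, sq]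
  have hb' := hb x y
  have hxx : |x ⬝ᵥ B *ᵥ y| = x ⬝ᵥ x := by rw [← hx, abs_of_nonneg hdx]
  rw [hxx] at hb'
  rw [hTv, hv]
  rcases eq_or_lt_of_le (Real.sqrt_nonneg (x ⬝ᵥ x)) with h0 | h0
  · rw [← h0]; positivity
  · have : Real.sqrt (x ⬝ᵥ x) * Real.sqrt (x ⬝ᵥ x)
        ≤ (G * Real.sqrt (y ⬝ᵥ y)) * Real.sqrt (x ⬝ᵥ x) := by
      rw [Real.mul_self_sqrt hdx]; linarith [hb']
    exact le_of_mul_le_mul_right this h0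

lemma msqrt_facts (A : Matrix (Fin d) (Fin d) ℝ) (hA : A.PosSemidef) :
    msqrt A * msqrt A = A ∧ (msqrt A)ᵀ = msqrt A := by
  have hm : msqrt A = hA.1.eigenvectorUnitary.1 * diagonal ((↑) ∘ (√·) ∘ hA.1.eigenvalues) *
      (star hA.1.eigenvectorUnitary : Matrix (Fin d) (Fin d) ℝ) := dif_pos hA
  set U := hA.1.eigenvectorUnitary with hU
  set D : Matrix (Fin d) (Fin d) ℝ := diagonal ((↑) ∘ (√·) ∘ hA.1.eigenvalues) with hD
  have hUU : (star U : Matrix (Fin d) (Fin d) ℝ) * U.1 = 1 := Unitary.coe_star_mul_self U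
  refine ⟨?_, ?_⟩
  · rw [hm]
    have hDD : D * D = diagonal (RCLike.ofReal ∘ hA.1.eigenvalues) := by
      rw [hD, diagonal_mul_diagonal]
      congr 1
      funext i
      simp [Real.mul_self_sqrt (hA.eigenvalues_nonneg i)]
    conv_rhs => rw [hA.1.spectral_theorem, Unitary.conjStarAlgAut_apply]
    rw [← hDD]
    calc U.1 * D * (star U : Matrix (Fin d) (Fin d) ℝ) * (U.1 * D * (star U : Matrix (Fin d) (Fin d) ℝ))
        = U.1 * D * ((star U : Matrix (Fin d) (Fin d) ℝ) * U.1) * D * (star U : Matrix (Fin d) (Fin d) ℝ) := by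
          simp only [Matrix.mul_assoc]
      _ = _ := by rw [hUU, Matrix.mul_one, Matrix.mul_assoc U.1 D D]
  · rw [hm, ← Matrix.conjTranspose_eq_transpose_of_trivial]
    rw [Matrix.conjTranspose_mul, Matrix.conjTranspose_mul, hD, Matrix.diagonal_conjTranspose]
    simp [Matrix.mul_assoc, Matrix.star_eq_conjTranspose]

end OccAux

theorem occupancy_transition_contraction
    {S A : Type*} [Fintype S] [Fintype A] [Nonempty S] [Nonempty A]
    (m H d : ℕ)
    (p : ℕ → S → A → S → ℝ)
    (π : (Fin m → ℝ) → ℕ → S → A → ℝ) (θ : Fin m → ℝ)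
    (ξ : S → ℝ)
    (hp_nonneg : ∀ h, 1 ≤ h → h ≤ H → ∀ s a s', 0 ≤ p h s a s')
    (hp_sum : ∀ h, 1 ≤ h → h ≤ H → ∀ s a, ∑ s', p h s a s' = 1)
    (hπ_nonneg : ∀ θ' h, 1 ≤ h → h ≤ H + 1 → ∀ s a, 0 ≤ π θ' h s a)
    (hπ_sum : ∀ θ' h, 1 ≤ h → h ≤ H + 1 → ∀ s, ∑ a, π θ' h s a = 1)
    (hξ_nonneg : ∀ s, 0 ≤ ξ s) (hξ_sum : ∑ s, ξ s = 1)
    (μ : ℕ → S → A → ℝ)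
    (hμ1 : ∀ s a, μ 1 s a = ξ s * π θ 1 s a)
    (hμrec : ∀ h, 1 ≤ h → h ≤ H → ∀ s' a',
      μ (h + 1) s' a' = ∑ s, ∑ a, μ h s a * p h s a s' * π θ (h + 1) s' a')
    (φ : S → A → Fin d → ℝ)
    (Sig : ℕ → Matrix (Fin d) (Fin d) ℝ)
    (hSig : ∀ h, Sig h = ∑ s, ∑ a, μ h s a • vecMulVec (φ s a) (φ s a))
    (h : ℕ) (hh1 : 1 ≤ h) (hhH : h ≤ H)
    (hpos : (Sig h).PosDef) (hpos' : (Sig (h + 1)).PosDef) :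
    (∀ M : Matrix (Fin d) (Fin d) ℝ,
      (∀ s a (j : Fin d),
        (φ s a ᵥ* M) j = ∑ s', p h s a s' * ∑ a', π θ (h + 1) s' a' * φ s' a' j) →
      specNorm (msqrt (Sig h) * M * (msqrt (Sig (h + 1)))⁻¹) ≤ 1) ∧
    (∀ G : ℝ, 0 ≤ G → ∀ c : S → A → ℝ, (∀ s' a', |c s' a'| ≤ G) →
      ∀ N : Matrix (Fin d) (Fin d) ℝ,
      (∀ s a (j : Fin d),
        (φ s a ᵥ* N) j = ∑ s', p h s a s' * ∑ a', π θ (h + 1) s' a' * c s' a' * φ s' a' j) →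
      specNorm (msqrt (Sig h) * N * (msqrt (Sig (h + 1)))⁻¹) ≤ G) := by
  classical
  -- nonnegativity of occupancy measures
  have hμpos : ∀ k, 1 ≤ k → k ≤ H + 1 → ∀ s a, 0 ≤ μ k s a := by
    intro k hk1
    induction k, hk1 using Nat.le_induction with
    | base =>
      intro _ s a
      rw [hμ1]
      exact mul_nonneg (hξ_nonneg s) (hπ_nonneg θ 1 le_rfl (by omega) s a)
    | succ k hk ih =>
      intro hkH s' a'
      have hkH' : k ≤ H := by omega
      rw [hμrec k hk hkH']
      refine Finset.sum_nonneg fun s _ => Finset.sum_nonneg fun a _ => ?_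
      exact mul_nonneg (mul_nonneg (ih (by omega) s a) (hp_nonneg k hk hkH' s a s'))
        (hπ_nonneg θ (k + 1) (by omega) (by omega) s' a')
  have hμh : ∀ s a, 0 ≤ μ h s a := hμpos h hh1 (by omega)
  have hπh1 : ∀ s a, 0 ≤ π θ (h + 1) s a :=
    fun s a => hπ_nonneg θ (h + 1) (by omega) (by omega) s a
  have hπs : ∀ s : S, ∑ a, π θ (h + 1) s a = 1 :=
    fun s => hπ_sum θ (h + 1) (by omega) (by omega) s
  have hpn : ∀ s a s', 0 ≤ p h s a s' := hp_nonneg h hh1 hhH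
  have hps : ∀ s a, ∑ s', p h s a s' = 1 := hp_sum h hh1 hhH
  -- quadratic form of Sig
  have hquad : ∀ k (u w : Fin d → ℝ), u ⬝ᵥ (Sig k) *ᵥ w
      = ∑ s, ∑ a, μ k s a * (u ⬝ᵥ φ s a) * (φ s a ⬝ᵥ w) := by
    intro k u w
    rw [hSig k, OccAux.dot_sum_mulVec]
    refine Finset.sum_congr rfl fun s _ => ?_
    rw [OccAux.dot_sum_mulVec]
    exact Finset.sum_congr rfl fun a _ => OccAux.dot_smul_vecMulVec ..
  -- square-root facts
  have hPS : (Sig h).PosSemidef := hpos.posSemidef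
  have hPS' : (Sig (h + 1)).PosSemidef := hpos'.posSemidef
  have hPsq : msqrt (Sig h) * msqrt (Sig h) = Sig h := (OccAux.msqrt_facts _ hPS).1
  have hQsq : msqrt (Sig (h + 1)) * msqrt (Sig (h + 1)) = Sig (h + 1) :=
    (OccAux.msqrt_facts _ hPS').1
  have hPsymm : (msqrt (Sig h))ᵀ = msqrt (Sig h) := (OccAux.msqrt_facts _ hPS).2
  have hQsymm : (msqrt (Sig (h + 1)))ᵀ = msqrt (Sig (h + 1)) := (OccAux.msqrt_facts _ hPS').2
  have hPdet : IsUnit (msqrt (Sig h)).det := by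
    have h2 : (msqrt (Sig h)).det * (msqrt (Sig h)).det = (Sig h).det := by
      rw [← Matrix.det_mul, hPsq]
    have h3 := hpos.det_pos
    refine isUnit_iff_ne_zero.2 fun h0 => ?_
    rw [h0, mul_zero] at h2
    exact absurd h2.symm (ne_of_gt h3)
  have hQdet : IsUnit (msqrt (Sig (h + 1))).det := by
    have h2 : (msqrt (Sig (h + 1))).det * (msqrt (Sig (h + 1))).det = (Sig (h + 1)).det := by
      rw [← Matrix.det_mul, hQsq]
    have h3 := hpos'.det_pos
    refine isUnit_iff_ne_zero.2 fun h0 => ?_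
    rw [h0, mul_zero] at h2
    exact absurd h2.symm (ne_of_gt h3)
  have hPinvL : (msqrt (Sig h))⁻¹ * msqrt (Sig h) = 1 := Matrix.nonsing_inv_mul _ hPdet
  have hPinvR : msqrt (Sig h) * (msqrt (Sig h))⁻¹ = 1 := Matrix.mul_nonsing_inv _ hPdet
  have hQinvL : (msqrt (Sig (h + 1)))⁻¹ * msqrt (Sig (h + 1)) = 1 :=
    Matrix.nonsing_inv_mul _ hQdet
  have hQinvR : msqrt (Sig (h + 1)) * (msqrt (Sig (h + 1)))⁻¹ = 1 :=
    Matrix.mul_nonsing_inv _ hQdet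
  have hPinvT : ((msqrt (Sig h))⁻¹)ᵀ = (msqrt (Sig h))⁻¹ := by
    rw [Matrix.transpose_nonsing_inv, hPsymm]
  have hQinvT : ((msqrt (Sig (h + 1)))⁻¹)ᵀ = (msqrt (Sig (h + 1)))⁻¹ := by
    rw [Matrix.transpose_nonsing_inv, hQsymm]
  have hPSig : (msqrt (Sig h))⁻¹ * Sig h = msqrt (Sig h) := by
    nth_rewrite 2 [← hPsq]
    rw [← Matrix.mul_assoc, hPinvL, Matrix.one_mul]
  have hQSig : (msqrt (Sig (h + 1)))⁻¹ * Sig (h + 1) = msqrt (Sig (h + 1)) := by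
    nth_rewrite 2 [← hQsq]
    rw [← Matrix.mul_assoc, hQinvL, Matrix.one_mul]
  -- part (b), main work
  have partb : ∀ G : ℝ, 0 ≤ G → ∀ c : S → A → ℝ, (∀ s' a', |c s' a'| ≤ G) →
      ∀ N : Matrix (Fin d) (Fin d) ℝ,
      (∀ s a (j : Fin d),
        (φ s a ᵥ* N) j = ∑ s', p h s a s' * ∑ a', π θ (h + 1) s' a' * c s' a' * φ s' a' j) →
      specNorm (msqrt (Sig h) * N * (msqrt (Sig (h + 1)))⁻¹) ≤ G := by
    intro G hG c hc N hN
    -- the key bilinear bound for Sig h * N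
    have key : ∀ u w : Fin d → ℝ, |u ⬝ᵥ (Sig h * N) *ᵥ w|
        ≤ G * Real.sqrt (u ⬝ᵥ (Sig h) *ᵥ u) * Real.sqrt (w ⬝ᵥ (Sig (h + 1)) *ᵥ w) := by
      intro u w
      set W : (S × A) × S × A → ℝ := fun z =>
        μ h z.1.1 z.1.2 * p h z.1.1 z.1.2 z.2.1 * π θ (h + 1) z.2.1 z.2.2 with hWdef
      have hW : ∀ z, 0 ≤ W z := fun z =>
        mul_nonneg (mul_nonneg (hμh _ _) (hpn _ _ _)) (hπh1 _ _)
      set X : S → A → ℝ := fun s a => u ⬝ᵥ φ s a with hXdef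
      set Y : S → A → ℝ := fun s a => φ s a ⬝ᵥ w with hYdef
      have hNrow : ∀ s a, φ s a ⬝ᵥ (N *ᵥ w)
          = ∑ s', p h s a s' * ∑ a', π θ (h + 1) s' a' * c s' a' * Y s' a' := by
        intro s a
        rw [Matrix.dotProduct_mulVec]
        show ∑ j, (φ s a ᵥ* N) j * w j = _
        simp only [hN]
        simp only [Finset.sum_mul, Finset.mul_sum, hYdef, dotProduct]
        rw [Finset.sum_comm]
        refine Finset.sum_congr rfl fun s' _ => ?_
        rw [Finset.sum_comm]
        exact Finset.sum_congr rfl fun a' _ =>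
          Finset.sum_congr rfl fun j _ => by ring
      have hrep : u ⬝ᵥ (Sig h * N) *ᵥ w
          = ∑ z : (S × A) × S × A,
              W z * c z.2.1 z.2.2 * X z.1.1 z.1.2 * Y z.2.1 z.2.2 := by
        rw [← Matrix.mulVec_mulVec, hquad h u (N *ᵥ w)]
        simp only [Fintype.sum_prod_type]
        refine Finset.sum_congr rfl fun s _ => Finset.sum_congr rfl fun a _ => ?_
        rw [hNrow s a]
        simp only [Finset.mul_sum]
        refine Finset.sum_congr rfl fun s' _ => ?_
        refine Finset.sum_congr rfl fun a' _ => by simp only [hWdef]; ring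
      have hXsum : ∑ z : (S × A) × S × A, W z * X z.1.1 z.1.2 ^ 2
          = u ⬝ᵥ (Sig h) *ᵥ u := by
        simp only [Fintype.sum_prod_type]
        rw [hquad h u u]
        refine Finset.sum_congr rfl fun s _ => Finset.sum_congr rfl fun a _ => ?_
        have h1 : ∀ s', ∑ a', W ((s, a), (s', a')) * X s a ^ 2
            = μ h s a * X s a ^ 2 * p h s a s' := by
          intro s'
          have h2 : ∀ a' : A, W ((s, a), (s', a')) * X s a ^ 2
              = μ h s a * X s a ^ 2 * p h s a s' * π θ (h + 1) s' a' := by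
            intro a'; simp only [hWdef]; ring
          rw [Finset.sum_congr rfl fun a' _ => h2 a', ← Finset.mul_sum, hπs, mul_one]
        rw [Finset.sum_congr rfl fun s' _ => h1 s', ← Finset.mul_sum, hps, mul_one,
          hXdef, dotProduct_comm (φ s a) u]
        ring
      have hYsum : ∑ z : (S × A) × S × A, W z * Y z.2.1 z.2.2 ^ 2
          = w ⬝ᵥ (Sig (h + 1)) *ᵥ w := by
        rw [Fintype.sum_prod_type, Finset.sum_comm]
        simp only [Fintype.sum_prod_type]
        rw [hquad (h + 1) w w]
        refine Finset.sum_congr rfl fun s' _ => Finset.sum_congr rfl fun a' _ => ?_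
        rw [hμrec h hh1 hhH s' a', Finset.sum_mul, Finset.sum_mul]
        refine Finset.sum_congr rfl fun s _ => ?_
        rw [Finset.sum_mul, Finset.sum_mul]
        refine Finset.sum_congr rfl fun a _ => ?_
        simp only [hWdef, hYdef]
        rw [dotProduct_comm w (φ s' a')]
        ring
      have cauchy := Real.sum_mul_le_sqrt_mul_sqrt Finset.univ
        (fun z : (S × A) × S × A => Real.sqrt (W z) * |X z.1.1 z.1.2|)
        (fun z => Real.sqrt (W z) * |Y z.2.1 z.2.2|)
      have e1 : ∑ z : (S × A) × S × A, (Real.sqrt (W z) * |X z.1.1 z.1.2|) ^ 2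
          = u ⬝ᵥ (Sig h) *ᵥ u := by
        rw [← hXsum]
        exact Finset.sum_congr rfl fun z _ => by
          rw [mul_pow, Real.sq_sqrt (hW z), sq_abs]
      have e2 : ∑ z : (S × A) × S × A, (Real.sqrt (W z) * |Y z.2.1 z.2.2|) ^ 2
          = w ⬝ᵥ (Sig (h + 1)) *ᵥ w := by
        rw [← hYsum]
        exact Finset.sum_congr rfl fun z _ => by
          rw [mul_pow, Real.sq_sqrt (hW z), sq_abs]
      rw [e1, e2] at cauchy
      calc |u ⬝ᵥ (Sig h * N) *ᵥ w|
          = |∑ z : (S × A) × S × A,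
              W z * c z.2.1 z.2.2 * X z.1.1 z.1.2 * Y z.2.1 z.2.2| := by rw [hrep]
        _ ≤ ∑ z : (S × A) × S × A,
              |W z * c z.2.1 z.2.2 * X z.1.1 z.1.2 * Y z.2.1 z.2.2| :=
            Finset.abs_sum_le_sum_abs _ _
        _ ≤ ∑ z : (S × A) × S × A,
              G * ((Real.sqrt (W z) * |X z.1.1 z.1.2|) * (Real.sqrt (W z) * |Y z.2.1 z.2.2|)) := by
            refine Finset.sum_le_sum fun z _ => ?_
            have hz : (Real.sqrt (W z) * |X z.1.1 z.1.2|) * (Real.sqrt (W z) * |Y z.2.1 z.2.2|)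
                = W z * (|X z.1.1 z.1.2| * |Y z.2.1 z.2.2|) := by
              rw [show (Real.sqrt (W z) * |X z.1.1 z.1.2|) * (Real.sqrt (W z) * |Y z.2.1 z.2.2|)
                  = (Real.sqrt (W z) * Real.sqrt (W z)) * (|X z.1.1 z.1.2| * |Y z.2.1 z.2.2|)
                  from by ring, Real.mul_self_sqrt (hW z)]
            rw [hz, abs_mul, abs_mul, abs_mul, abs_of_nonneg (hW z)]
            calc W z * |c z.2.1 z.2.2| * |X z.1.1 z.1.2| * |Y z.2.1 z.2.2|
                = |c z.2.1 z.2.2| * (W z * (|X z.1.1 z.1.2| * |Y z.2.1 z.2.2|)) := by ring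
              _ ≤ G * (W z * (|X z.1.1 z.1.2| * |Y z.2.1 z.2.2|)) := by
                  exact mul_le_mul_of_nonneg_right (hc _ _)
                    (mul_nonneg (hW z) (mul_nonneg (abs_nonneg _) (abs_nonneg _)))
        _ = G * ∑ z : (S × A) × S × A,
              (Real.sqrt (W z) * |X z.1.1 z.1.2|) * (Real.sqrt (W z) * |Y z.2.1 z.2.2|) :=
            (Finset.mul_sum _ _ _).symm
        _ ≤ G * (Real.sqrt (u ⬝ᵥ (Sig h) *ᵥ u) * Real.sqrt (w ⬝ᵥ (Sig (h + 1)) *ᵥ w)) :=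
            mul_le_mul_of_nonneg_left cauchy hG
        _ = G * Real.sqrt (u ⬝ᵥ (Sig h) *ᵥ u) * Real.sqrt (w ⬝ᵥ (Sig (h + 1)) *ᵥ w) := by ring
    -- reduce the spectral-norm goal to the bilinear bound
    refine OccAux.specNorm_le_of_bound _ hG fun x y => ?_
    have e1 : ((msqrt (Sig h))⁻¹ *ᵥ x) ⬝ᵥ (Sig h * N) *ᵥ ((msqrt (Sig (h + 1)))⁻¹ *ᵥ y)
        = x ⬝ᵥ (msqrt (Sig h) * N * (msqrt (Sig (h + 1)))⁻¹) *ᵥ y := by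
      rw [Matrix.mulVec_mulVec, OccAux.dot_mv_mv, hPinvT]
      have hm : (msqrt (Sig h))⁻¹ * (Sig h * N * (msqrt (Sig (h + 1)))⁻¹)
          = msqrt (Sig h) * N * (msqrt (Sig (h + 1)))⁻¹ := by
        simp only [← Matrix.mul_assoc]
        rw [hPSig]
      rw [hm]
    have e2 : ((msqrt (Sig h))⁻¹ *ᵥ x) ⬝ᵥ (Sig h) *ᵥ ((msqrt (Sig h))⁻¹ *ᵥ x)
        = x ⬝ᵥ x := by
      rw [Matrix.mulVec_mulVec, OccAux.dot_mv_mv, hPinvT]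
      have hm : (msqrt (Sig h))⁻¹ * (Sig h * (msqrt (Sig h))⁻¹) = 1 := by
        simp only [← Matrix.mul_assoc]
        rw [hPSig, hPinvR]
      rw [hm, Matrix.one_mulVec]
    have e3 : ((msqrt (Sig (h + 1)))⁻¹ *ᵥ y) ⬝ᵥ (Sig (h + 1)) *ᵥ ((msqrt (Sig (h + 1)))⁻¹ *ᵥ y)
        = y ⬝ᵥ y := by
      rw [Matrix.mulVec_mulVec, OccAux.dot_mv_mv, hQinvT]
      have hm : (msqrt (Sig (h + 1)))⁻¹ * (Sig (h + 1) * (msqrt (Sig (h + 1)))⁻¹) = 1 := by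
        simp only [← Matrix.mul_assoc]
        rw [hQSig, hQinvR]
      rw [hm, Matrix.one_mulVec]
    rw [← e1, ← e2, ← e3]
    exact key _ _
  refine ⟨fun M hM => ?_, partb⟩
  refine partb 1 zero_le_one (fun _ _ => 1) (fun _ _ => by simp) M fun s a j => ?_
  simpa only [mul_one] using hM s a j
end

section
/- Let Σ and Σ' be positive definite real d×d matrices, Σ̂ an invertible real d×d matrix, and M, ΔY real d×d matrices with ‖Σ^{1/2} M Σ'^{-1/2}‖ ≤ 1. Define M̂ := Σ̂^{-1} (Σ M + ΔY). Then ‖Σ^{1/2} (M̂ − M) Σ'^{-1/2}‖ ≤ (1 + ‖Σ^{1/2} (Σ̂^{-1} − Σ^{-1}) Σ^{1/2}‖)(1 + ‖Σ^{-1/2} ΔY Σ'^{-1/2}‖) − 1. -/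
open Matrix

lemma specNorm_nonneg {d : ℕ} (A : Matrix (Fin d) (Fin d) ℝ) : 0 ≤ specNorm A :=
  norm_nonneg _

lemma specNorm_add_le {d : ℕ} (A B : Matrix (Fin d) (Fin d) ℝ) :
    specNorm (A + B) ≤ specNorm A + specNorm B := by
  simp only [specNorm, map_add]; exact norm_add_le _ _

lemma specNorm_mul_le {d : ℕ} (A B : Matrix (Fin d) (Fin d) ℝ) :
    specNorm (A * B) ≤ specNorm A * specNorm B := by
  simp only [specNorm, _root_.map_mul]; exact norm_mul_le _ _

lemma msqrt_mul_self {d : ℕ} {A : Matrix (Fin d) (Fin d) ℝ} (hA : A.PosSemidef) :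
    msqrt A * msqrt A = A := by
  rw [msqrt, dif_pos hA]
  set U : Matrix (Fin d) (Fin d) ℝ := hA.1.eigenvectorUnitary.1 with hUdef
  set sU : Matrix (Fin d) (Fin d) ℝ := (star hA.1.eigenvectorUnitary : Matrix (Fin d) (Fin d) ℝ)
    with hsU
  set D : Matrix (Fin d) (Fin d) ℝ := diagonal ((↑) ∘ (√·) ∘ hA.1.eigenvalues) with hDdef
  have hU : sU * U = 1 := Unitary.coe_star_mul_self _
  have hD : D * D = diagonal (RCLike.ofReal ∘ hA.1.eigenvalues) := by
    rw [hDdef, diagonal_mul_diagonal]; congr 1; funext i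
    simp [Real.mul_self_sqrt (hA.eigenvalues_nonneg i)]
  have h2 : U * D * sU * (U * D * sU) = U * (D * D) * sU := by
    rw [show U * D * sU * (U * D * sU) = U * D * (sU * U) * D * sU by
      simp only [Matrix.mul_assoc], hU, Matrix.mul_one]
    simp only [Matrix.mul_assoc]
  rw [h2, hD]
  conv_rhs => rw [hA.1.spectral_theorem, Unitary.conjStarAlgAut_apply]

lemma msqrt_isUnit {d : ℕ} {A : Matrix (Fin d) (Fin d) ℝ} (hA : A.PosDef) :
    IsUnit (msqrt A) := by
  have h := msqrt_mul_self hA.posSemidef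
  have : IsUnit (A.det) := isUnit_iff_ne_zero.2 (ne_of_gt hA.det_pos)
  rw [← h, det_mul] at this
  exact (Matrix.isUnit_iff_isUnit_det _).2 (isUnit_of_mul_isUnit_left this)

theorem estimated_transition_perturbation_bound {d : ℕ}
    (S S' Shat M ΔY : Matrix (Fin d) (Fin d) ℝ)
    (hS : S.PosDef) (hS' : S'.PosDef) (hShat : IsUnit Shat)
    (hM : specNorm (msqrt S * M * (msqrt S')⁻¹) ≤ 1) :
    specNorm (msqrt S * (Shat⁻¹ * (S * M + ΔY) - M) * (msqrt S')⁻¹)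
      ≤ (1 + specNorm (msqrt S * (Shat⁻¹ - S⁻¹) * msqrt S))
          * (1 + specNorm ((msqrt S)⁻¹ * ΔY * (msqrt S')⁻¹)) - 1 := by
  set Q := msqrt S with hQ
  set R := (msqrt S')⁻¹ with hR
  have hQu : IsUnit Q := msqrt_isUnit hS
  have hQQ : Q * Q = S := msqrt_mul_self hS.posSemidef
  have hQinv : Q * Q⁻¹ = 1 := mul_nonsing_inv _ ((isUnit_iff_isUnit_det _).1 hQu)
  have hSinv : S⁻¹ = Q⁻¹ * Q⁻¹ := by rw [← hQQ, Matrix.mul_inv_rev]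
  have hSiS : S⁻¹ * S = 1 := nonsing_inv_mul _ (isUnit_iff_ne_zero.2 (ne_of_gt hS.det_pos))
  set E := Q * (Shat⁻¹ - S⁻¹) * Q with hE
  set F := Q⁻¹ * ΔY * R with hF
  set T := Q * M * R with hT
  have key : Q * (Shat⁻¹ * (S * M + ΔY) - M) * R = E * T + (E * F + F) := by
    have h1 : Shat⁻¹ * (S * M + ΔY) - M
        = (Shat⁻¹ - S⁻¹) * (S * M) + ((Shat⁻¹ - S⁻¹) * ΔY + S⁻¹ * ΔY) := by
      rw [sub_mul, sub_mul]
      rw [show S⁻¹ * (S * M) = M by rw [← Matrix.mul_assoc, hSiS, Matrix.one_mul]]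
      noncomm_ring
    rw [h1]
    have hET : E * T = Q * ((Shat⁻¹ - S⁻¹) * (S * M)) * R := by
      rw [hE, hT, ← hQQ]; noncomm_ring
    have hEF : E * F = Q * ((Shat⁻¹ - S⁻¹) * ΔY) * R := by
      rw [hE, hF]
      rw [show Q * (Shat⁻¹ - S⁻¹) * Q * (Q⁻¹ * ΔY * R)
          = Q * (Shat⁻¹ - S⁻¹) * (Q * Q⁻¹) * (ΔY * R) by noncomm_ring, hQinv]
      noncomm_ring
    have hFe : F = Q * (S⁻¹ * ΔY) * R := by
      rw [hF, hSinv]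
      rw [show Q * (Q⁻¹ * Q⁻¹ * ΔY) * R = (Q * Q⁻¹) * (Q⁻¹ * ΔY * R) by noncomm_ring,
        hQinv, Matrix.one_mul]
    rw [hET, hEF, hFe]
    noncomm_ring
  rw [key]
  have h1 : specNorm (E * T + (E * F + F))
      ≤ specNorm E * specNorm T + (specNorm E * specNorm F + specNorm F) := by
    calc specNorm (E * T + (E * F + F))
        ≤ specNorm (E * T) + specNorm (E * F + F) := specNorm_add_le _ _
      _ ≤ specNorm (E * T) + (specNorm (E * F) + specNorm F) := by
          have := specNorm_add_le (E * F) F; linarith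
      _ ≤ specNorm E * specNorm T + (specNorm E * specNorm F + specNorm F) := by
          have := specNorm_mul_le E T
          have := specNorm_mul_le E F
          linarith
  have hEnn := specNorm_nonneg E
  have hFnn := specNorm_nonneg F
  nlinarith [hM, specNorm_nonneg T]
end
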